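/- (Homogenization via an auxiliary variable.) Let r ∈ ℝ_{>0}^n, q ∈ ℝ_{>0}^m, and suppose each component f_i(x,u) = Σ_{j=0}^{N} g_{i,j}(x,u) where each g_{i,j} is homogeneous of degree ν_{i,j} with respect to (λ^r, λ^q), i.e., g_{i,j}(λ^r(ε)x, λ^q(ε)u) = ε^{ν_{i,j}} g_{i,j}(x,u). Set ν := 1 + max_{i,j} ν_{i,j}/r_i (assumed a positive integer). Then the extended vector field f̃ on ℝ^{n+1} defined by f̃_i(x,w,u) = Σ_j w^{(r_i ν − ν_{i,j})ν} g_{i,j}(x,u) for i ≤ n and f̃_{n+1}(x,w,u) = sign(w)|w|^ν satisfies f̃(λ^{(r,1/ν)}(ε)(x,w), λ^q(ε)u) = λ^{(r,1/ν)}(ε)^ν f̃(x,w,u), i.e., f̃ is homogeneous of degree ν with respect to the dilation pair (λ^{(r,1/ν)}, λ^q). -/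
import Mathlib


noncomputable section

def dil {n : ℕ} (r : Fin n → ℝ) (ε : ℝ) (x : Fin n → ℝ) : Fin n → ℝ :=
  fun i => ε ^ (r i) * x i

/-- Signed power `⌈w⌋^a = sign(w)|w|^a`. -/
def spow (w a : ℝ) : ℝ := Real.sign w * |w| ^ a


lemma mul_rpow_pos_left {c : ℝ} (hc : 0 < c) (x a : ℝ) :
    (c * x) ^ a = c ^ a * x ^ a := by
  rcases lt_trichotomy x 0 with hx | rfl | hx
  · rw [Real.rpow_def_of_neg (mul_neg_of_pos_of_neg hc hx),
      Real.rpow_def_of_neg hx, Real.rpow_def_of_pos hc,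
      Real.log_mul hc.ne' hx.ne, add_mul, Real.exp_add]
    ring
  · rcases eq_or_ne a 0 with rfl | h
    · simp
    · simp [Real.zero_rpow h]
  · exact Real.mul_rpow hc.le hx.le

theorem stmt9 {n m N : ℕ}
    (g : Fin n → Fin (N + 1) → (Fin n → ℝ) → (Fin m → ℝ) → ℝ)
    (νd : Fin n → Fin (N + 1) → ℝ)
    (r : Fin n → ℝ) (q : Fin m → ℝ)
    (hr : ∀ i, 0 < r i) (hq : ∀ j, 0 < q j)
    (hg : ∀ i j x u (ε : ℝ), 0 < ε →
      g i j (dil r ε x) (dil q ε u) = ε ^ (νd i j) * g i j x u)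
    (ν : ℝ)
    (hνub : ∀ i j, νd i j / r i ≤ ν - 1)
    (hνmax : ∃ i j, ν = 1 + νd i j / r i)
    (hνint : ∃ k : ℕ, 0 < k ∧ ν = (k : ℝ)) :
    ∀ (x : Fin n → ℝ) (w : ℝ) (u : Fin m → ℝ) (ε : ℝ), 0 < ε →
      (∀ i, (∑ j, (ε ^ (1 / ν) * w) ^ ((r i * ν - νd i j) * ν)
                * g i j (dil r ε x) (dil q ε u))
          = ε ^ (r i * ν) * ∑ j, w ^ ((r i * ν - νd i j) * ν) * g i j x u)
      ∧ spow (ε ^ (1 / ν) * w) ν = ε ^ ((1 / ν) * ν) * spow w ν := by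
  obtain ⟨k, hk, hνk⟩ := hνint
  have hν0 : ν ≠ 0 := by rw [hνk]; exact_mod_cast hk.ne'
  intro x w u ε hε
  have hc : 0 < ε ^ (1/ν) := Real.rpow_pos_of_pos hε _
  constructor
  · intro i
    rw [Finset.mul_sum]
    refine Finset.sum_congr rfl fun j _ => ?_
    rw [hg i j x u ε hε, mul_rpow_pos_left hc,
      ← Real.rpow_mul hε.le]
    have e1 : (1/ν) * ((r i * ν - νd i j) * ν) = r i * ν - νd i j := by
      field_simp
    have e2 : ε ^ (r i * ν - νd i j) * ε ^ (νd i j) = ε ^ (r i * ν) := by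
      rw [← Real.rpow_add hε]; ring_nf
    rw [e1, ← e2]; ring
  · unfold spow
    have hsign : Real.sign (ε ^ (1/ν) * w) = Real.sign w := by
      rcases lt_trichotomy w 0 with h | rfl | h
      · rw [Real.sign_of_neg h, Real.sign_of_neg (mul_neg_of_pos_of_neg hc h)]
      · simp
      · rw [Real.sign_of_pos h, Real.sign_of_pos (mul_pos hc h)]
    rw [hsign, abs_mul, abs_of_pos hc,
      Real.mul_rpow hc.le (abs_nonneg w), ← Real.rpow_mul hε.le]
    ring
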